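/- Let R be a commutative ring and let f : M → N be an R-linear map between projective R-modules. If for some integer k ≥ 1 the induced map f^{⊗k} : M^{⊗k} → N^{⊗k} between the k-th tensor powers (taken over R) is surjective, then f itself is surjective. -/

import Mathlib

set_option maxRecDepth 4000


open scoped TensorProduct

/-- If `f : M → N` is an `R`-linear map between projective modules whose `k`-th tensor power
(`k ≥ 1`) is surjective, then `f` is surjective. -/
theorem tensor_power_surjective_of_projective
    {R M N : Type*} [CommRing R] [AddCommGroup M] [Module R M]
    [AddCommGroup N] [Module R N]
    (hM : Module.Projective R M) (hN : Module.Projective R N)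
    (f : M →ₗ[R] N) (k : ℕ) (hk : 1 ≤ k)
    (h : Function.Surjective (PiTensorProduct.map (fun _ : Fin k => f))) :
    Function.Surjective f := by
  obtain ⟨j, rfl⟩ : ∃ j, k = j + 1 := ⟨k - 1, (Nat.succ_pred_eq_of_pos hk).symm⟩
  set S : Submodule R N := LinearMap.range f with hSdef
  set π : N →ₗ[R] N ⧸ S := S.mkQ with hπdef
  -- Key fact coming from surjectivity of the tensor power:
  -- for any `j` functionals and elements, the product of values times any element is in `S`.
  have key : ∀ (φ : Fin j → (N →ₗ[R] R)) (x : Fin (j + 1) → N),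
      (∏ i, φ i (x i.castSucc)) • (x (Fin.last j)) ∈ S := by
    intro φ x
    set F : MultilinearMap R (fun _ : Fin (j + 1) => N) (N ⧸ S) :=
      (((MultilinearMap.mkPiAlgebra R (Fin j) R).compLinearMap φ).smulRight π).uncurryRight
      with hF
    have hcomp : (PiTensorProduct.lift F) ∘ₗ
        (PiTensorProduct.map fun _ : Fin (j + 1) => f) = 0 := by
      ext m
      simp only [LinearMap.compMultilinearMap_apply, LinearMap.coe_comp, Function.comp_apply,
        PiTensorProduct.map_tprod, PiTensorProduct.lift.tprod, LinearMap.zero_apply,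
        MultilinearMap.zero_apply, hF, MultilinearMap.uncurryRight_apply,
        MultilinearMap.smulRight_apply, MultilinearMap.compLinearMap_apply,
        MultilinearMap.mkPiAlgebra_apply]
      have : π (f (m (Fin.last j))) = 0 := by
        simp [hπdef, Submodule.Quotient.mk_eq_zero, hSdef]
      rw [LinearMap.smul_apply, this, smul_zero]
    have hz : PiTensorProduct.lift F (PiTensorProduct.tprod R x) = 0 := by
      obtain ⟨z, hz⟩ := h (PiTensorProduct.tprod R x)
      rw [← hz, ← LinearMap.comp_apply, hcomp, LinearMap.zero_apply]
    rw [PiTensorProduct.lift.tprod] at hz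
    have hz' : π ((∏ i, φ i (x i.castSucc)) • (x (Fin.last j))) = 0 := by
      rw [map_smul]
      simpa [hF, MultilinearMap.uncurryRight_apply, MultilinearMap.smulRight_apply,
        Fin.init_def] using hz
    rwa [hπdef, Submodule.mkQ_apply, Submodule.Quotient.mk_eq_zero] at hz'
  -- dual basis from projectivity of N
  obtain ⟨s, hs⟩ := Module.projective_def.mp hN
  -- descent: products of `j - t` functional values times anything are in `S`
  have main : ∀ (t : ℕ), t ≤ j → ∀ (l : List R),
      (∀ r ∈ l, ∃ (φ : N →ₗ[R] R) (x : N), φ x = r) → l.length = j - t →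
      ∀ y : N, l.prod • y ∈ S := by
    intro t
    induction t with
    | zero =>
      intro _ l hl hlen y
      rw [Nat.sub_zero] at hlen
      subst hlen
      choose φ x hφx using fun i : Fin l.length => hl (l.get i) (List.get_mem l i)
      have hprod : l.prod = ∏ i, φ i (x i) := by
        conv_lhs => rw [← List.ofFn_get l]
        rw [List.prod_ofFn]
        exact Finset.prod_congr rfl fun i _ => (hφx i).symm
      have hk2 := key φ (Fin.snoc x y)
      simp only [Fin.snoc_castSucc, Fin.snoc_last] at hk2
      rwa [hprod]
    | succ t ih =>
      intro ht l hl hlen y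
      have ht' : t ≤ j := Nat.le_of_succ_le ht
      have hy : y = (s y).sum fun a c => c • a := by
        conv_lhs => rw [← hs y]
        rw [Finsupp.linearCombination_apply]
        rfl
      rw [hy, Finsupp.sum, Finset.smul_sum]
      refine Submodule.sum_mem S fun a ha => ?_
      have hmem := ih ht' (((s y) a) :: l)
        (by
          intro r hr
          rcases List.mem_cons.mp hr with hr | hr
          · exact ⟨(Finsupp.lapply a).comp s, y, by simp [hr]⟩
          · exact hl r hr)
        (by simp [hlen]; omega)
        a
      have heq : l.prod • ((s y) a • a) = (((s y) a) :: l).prod • a := by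
        rw [List.prod_cons, smul_smul, mul_comm]
      rw [heq]
      exact hmem
  intro y
  have := main j le_rfl [] (by simp) (by simp) y
  simpa [hSdef] using this
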